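/- Let k be an algebraically closed field of characteristic 2 and let 𝔽₄ = {a ∈ k : a⁴ = a} be its unique subfield with four elements. Let F₆ = x₀x₁x₂(x₀³+x₁³+x₂³) ∈ k[x₀,x₁,x₂]. For a nonzero vector (x₀,x₁,x₂) ∈ k³, the three partial derivatives ∂F₆/∂x₀, ∂F₆/∂x₁, ∂F₆/∂x₂ all vanish at (x₀,x₁,x₂) if and only if there exists a nonzero λ ∈ k such that (λx₀, λx₁, λx₂) ∈ 𝔽₄³. In other words, the common zeros of the partial derivatives of F₆ in ℙ²(k) are exactly the 21 points of ℙ²(𝔽₄). -/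

import Mathlib

open MvPolynomial

/-- The sextic form `x₀x₁x₂(x₀³+x₁³+x₂³)`. -/
noncomputable def F₆ (k : Type*) [CommRing k] : MvPolynomial (Fin 3) k :=
  X 0 * X 1 * X 2 * (X 0 ^ 3 + X 1 ^ 3 + X 2 ^ 3)

/-- For a nonzero vector over an algebraically closed field `k` of characteristic 2, all three
partial derivatives of `F₆` vanish iff the vector is proportional to a vector with coordinates
in the subfield `𝔽₄ = {a : a⁴ = a}` of `k`. -/
theorem stmt_0 (k : Type*) [Field k] [IsAlgClosed k] [CharP k 2]
    (v : Fin 3 → k) (hv : v ≠ 0) :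
    (∀ i : Fin 3, eval v (pderiv i (F₆ k)) = 0) ↔
      ∃ lam : k, lam ≠ 0 ∧ ∀ i : Fin 3, (lam * v i) ^ 4 = lam * v i := by
  have h2 : (2:k) = 0 := by exact_mod_cast CharP.cast_eq_zero k 2
  have e0 : eval v (pderiv 0 (F₆ k)) = v 1 * v 2 * (v 1 ^ 3 + v 2 ^ 3) := by
    simp [F₆, pderiv_mul, pderiv_pow, pderiv_X]
    ring_nf
    linear_combination (2 * v 0 ^ 3 * v 1 * v 2) * h2
  have e1 : eval v (pderiv 1 (F₆ k)) = v 0 * v 2 * (v 0 ^ 3 + v 2 ^ 3) := by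
    simp [F₆, pderiv_mul, pderiv_pow, pderiv_X]
    ring_nf
    linear_combination (2 * v 1 ^ 3 * v 0 * v 2) * h2
  have e2 : eval v (pderiv 2 (F₆ k)) = v 0 * v 1 * (v 0 ^ 3 + v 1 ^ 3) := by
    simp [F₆, pderiv_mul, pderiv_pow, pderiv_X]
    ring_nf
    linear_combination (2 * v 2 ^ 3 * v 0 * v 1) * h2
  -- auxiliary facts
  have aux : ∀ a b : k, b ≠ 0 → a * b * (a ^ 3 + b ^ 3) = 0 →
      (b⁻¹ * a) ^ 4 = b⁻¹ * a := by
    intro a b hb h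
    rcases mul_eq_zero.mp h with h | h
    · rcases mul_eq_zero.mp h with h | h
      · simp [h]
      · exact absurd h hb
    · have hab : a ^ 3 = b ^ 3 := by linear_combination h - b ^ 3 * h2
      field_simp
      linear_combination a * hab
  have conv : ∀ a b lam : k, lam ≠ 0 → (lam * a) ^ 4 = lam * a →
      (lam * b) ^ 4 = lam * b → a * b * (a ^ 3 + b ^ 3) = 0 := by
    intro a b lam hl ha hb
    rcases eq_or_ne a 0 with h | h; · simp [h]
    rcases eq_or_ne b 0 with h' | h'; · simp [h']
    have ha3 : (lam * a) ^ 3 = 1 := by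
      have := mul_left_cancel₀ (mul_ne_zero hl h) (by linear_combination ha : (lam * a) * (lam * a) ^ 3 = (lam * a) * 1)
      exact this
    have hb3 : (lam * b) ^ 3 = 1 := by
      have := mul_left_cancel₀ (mul_ne_zero hl h') (by linear_combination hb : (lam * b) * (lam * b) ^ 3 = (lam * b) * 1)
      exact this
    have hab : a ^ 3 = b ^ 3 := by
      have h3 : lam ^ 3 * a ^ 3 = lam ^ 3 * b ^ 3 := by
        linear_combination ha3 - hb3
      exact mul_left_cancel₀ (pow_ne_zero 3 hl) h3
    linear_combination (a * b) * hab + (a * b ^ 4) * h2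
  constructor
  · intro h
    have h0 := h 0; rw [e0] at h0
    have h1 := h 1; rw [e1] at h1
    have hh2 := h 2; rw [e2] at hh2
    obtain ⟨j, hj⟩ := Function.ne_iff.mp hv
    simp only [Pi.zero_apply] at hj
    refine ⟨(v j)⁻¹, inv_ne_zero hj, ?_⟩
    intro i
    apply aux _ _ hj
    have hi3 : i = 0 ∨ i = 1 ∨ i = 2 := by omega
    have hj3 : j = 0 ∨ j = 1 ∨ j = 2 := by omega
    rcases hi3 with rfl | rfl | rfl <;> rcases hj3 with rfl | rfl | rfl <;>
      first
        | linear_combination (v 0 ^ 2 * v 0 ^ 3) * h2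
        | linear_combination (v 1 ^ 2 * v 1 ^ 3) * h2
        | linear_combination (v 2 ^ 2 * v 2 ^ 3) * h2
        | linear_combination h0
        | linear_combination h1
        | linear_combination hh2
  · rintro ⟨lam, hl, hkey⟩ i
    have hi3 : i = 0 ∨ i = 1 ∨ i = 2 := by omega
    rcases hi3 with rfl | rfl | rfl
    · rw [e0]; exact conv _ _ _ hl (hkey 1) (hkey 2)
    · rw [e1]; exact conv _ _ _ hl (hkey 0) (hkey 2)
    · rw [e2]; exact conv _ _ _ hl (hkey 0) (hkey 1)
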